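/- Let f : ℝ^d → ℝ be continuously differentiable, let Y = {x ∈ ℝ^d | ∇f(x) ≠ 0} be its set of regular points, and fix 0 < p < 1/2. Then f is p-improvable on Y: there exists a lower semicontinuous function ξ̃ : Y → (0,1] such that ξ̃(x) ≤ ξ_p^f(x) for all x ∈ Y. (In particular, the function ξ_p^f : ℝ^d → [0,∞] is lower semicontinuous and is positive at every point of Y.) -/

import Mathlib

open MeasureTheory Set Filter

/-- Isotropic Gaussian measure `N(m, σ²I)` on `ℝ^d`, defined by its density
`x ↦ (2π)^{-d/2} σ^{-d} exp(−‖x−m‖²/(2σ²))` w.r.t. Lebesgue measure. -/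
noncomputable def gaussES (d : ℕ) (m : EuclideanSpace ℝ (Fin d)) (σ : ℝ) :
    Measure (EuclideanSpace ℝ (Fin d)) :=
  volume.withDensity fun x =>
    ENNReal.ofReal ((2 * Real.pi) ^ (-(d : ℝ) / 2) * (σ ^ d)⁻¹ *
      Real.exp (-‖x - m‖ ^ 2 / (2 * σ ^ 2)))

/-- Success probability of strict improvement: `p_f^<(m,σ)`. -/
noncomputable def pLt (d : ℕ) (f : EuclideanSpace ℝ (Fin d) → ℝ)
    (m : EuclideanSpace ℝ (Fin d)) (σ : ℝ) : ENNReal :=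
  gaussES d m σ {x | f x < f m}

/-- Success probability of weak improvement: `p_f^≤(m,σ)`. -/
noncomputable def pLe (d : ℕ) (f : EuclideanSpace ℝ (Fin d) → ℝ)
    (m : EuclideanSpace ℝ (Fin d)) (σ : ℝ) : ENNReal :=
  gaussES d m σ {x | f x ≤ f m}

/-- Lower step-size threshold `ξ_p^f(m) = inf {σ > 0 | p_f^<(m,σ) ≤ p}`, with `inf ∅ = ∞`. -/
noncomputable def xiES (d : ℕ) (f : EuclideanSpace ℝ (Fin d) → ℝ) (p : ℝ)
    (m : EuclideanSpace ℝ (Fin d)) : ENNReal :=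
  sInf {s : ENNReal | ∃ σ : ℝ, 0 < σ ∧ s = ENNReal.ofReal σ ∧ pLt d f m σ ≤ ENNReal.ofReal p}

/-- Upper step-size threshold `η_p^f(m) = sup {σ > 0 | p_f^≤(m,σ) ≥ p}`, with `sup ∅ = 0`. -/
noncomputable def etaES (d : ℕ) (f : EuclideanSpace ℝ (Fin d) → ℝ) (p : ℝ)
    (m : EuclideanSpace ℝ (Fin d)) : ENNReal :=
  sSup {s : ENNReal | ∃ σ : ℝ, 0 < σ ∧ s = ENNReal.ofReal σ ∧ ENNReal.ofReal p ≤ pLe d f m σ}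

open scoped RealInnerProductSpace

lemma gauss_density_measurable (d : ℕ) (m : EuclideanSpace ℝ (Fin d)) (σ : ℝ) :
    Measurable fun x : EuclideanSpace ℝ (Fin d) =>
      ENNReal.ofReal ((2 * Real.pi) ^ (-(d : ℝ) / 2) * (σ ^ d)⁻¹ *
        Real.exp (-‖x - m‖ ^ 2 / (2 * σ ^ 2))) := by
  apply Measurable.ennreal_ofReal
  fun_prop

lemma gaussES_apply (d : ℕ) (m : EuclideanSpace ℝ (Fin d)) (σ : ℝ)
    {A : Set (EuclideanSpace ℝ (Fin d))} (hA : MeasurableSet A) :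
    gaussES d m σ A =
      ∫⁻ x in A, ENNReal.ofReal ((2 * Real.pi) ^ (-(d : ℝ) / 2) * (σ ^ d)⁻¹ *
        Real.exp (-‖x - m‖ ^ 2 / (2 * σ ^ 2))) := by
  rw [gaussES, withDensity_apply _ hA]

lemma gaussES_map (d : ℕ) (m : EuclideanSpace ℝ (Fin d)) {σ : ℝ} (hσ : 0 < σ)
    {A : Set (EuclideanSpace ℝ (Fin d))} (hA : MeasurableSet A) :
    gaussES d m σ A = gaussES d 0 1 ((fun u => m + σ • u) ⁻¹' A) := by
  have hTmeas : Measurable fun u : EuclideanSpace ℝ (Fin d) => m + σ • u := by fun_prop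
  have hmap : Measure.map (fun u : EuclideanSpace ℝ (Fin d) => m + σ • u) volume
      = ENNReal.ofReal ((σ ^ d)⁻¹) • volume := by
    have : (fun u : EuclideanSpace ℝ (Fin d) => m + σ • u)
        = (fun x => m + x) ∘ (fun u => σ • u) := rfl
    rw [this, ← Measure.map_map (by fun_prop) (by fun_prop)]
    rw [Measure.map_addHaar_smul volume hσ.ne']
    rw [Measure.map_smul, map_add_left_eq_self]
    congr 1
    rw [finrank_euclideanSpace_fin, abs_of_nonneg (by positivity)]
  rw [gaussES_apply d m σ hA, gaussES_apply d 0 1 (hTmeas hA)]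
  have h1 : ∫⁻ x in A, ENNReal.ofReal ((2 * Real.pi) ^ (-(d : ℝ) / 2) * (σ ^ d)⁻¹ *
        Real.exp (-‖x - m‖ ^ 2 / (2 * σ ^ 2))) ∂volume
      = ENNReal.ofReal (σ ^ d) * ∫⁻ x in A, ENNReal.ofReal ((2 * Real.pi) ^ (-(d : ℝ) / 2) * (σ ^ d)⁻¹ *
        Real.exp (-‖x - m‖ ^ 2 / (2 * σ ^ 2))) ∂(Measure.map (fun u => m + σ • u) volume) := by
    rw [hmap]
    rw [Measure.restrict_smul, lintegral_smul_measure, smul_eq_mul, ← mul_assoc]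
    rw [← ENNReal.ofReal_mul (by positivity), mul_inv_cancel₀ (by positivity), ENNReal.ofReal_one, one_mul]
  rw [h1, Measure.restrict_map hTmeas hA, lintegral_map (gauss_density_measurable d m σ) hTmeas]
  rw [← lintegral_const_mul' _ _ ENNReal.ofReal_ne_top]
  apply lintegral_congr
  intro u
  rw [← ENNReal.ofReal_mul (by positivity)]
  congr 1
  have hnorm : ‖m + σ • u - m‖ = σ * ‖u‖ := by
    simp [norm_smul, abs_of_nonneg hσ.le]
  rw [hnorm, sub_zero]
  have h2 : (σ * ‖u‖) ^ 2 / (2 * σ ^ 2) = ‖u‖ ^ 2 / 2 := by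
    field_simp
  rw [neg_div, neg_div, h2]
  have hσd : (σ:ℝ) ^ d ≠ 0 := by positivity
  field_simp
  rw [one_pow]

lemma integrable_std (d : ℕ) :
    Integrable (fun v : EuclideanSpace ℝ (Fin d) => Real.exp (-(1/2) * ‖v‖ ^ 2)) := by
  have h := (GaussianFourier.integrable_cexp_neg_mul_sq_norm_add
      (V := EuclideanSpace ℝ (Fin d)) (b := (1/2 : ℂ)) (by norm_num) 0 0).norm
  convert h using 2 with v
  rw [Complex.norm_exp]
  norm_num
  norm_cast

lemma std_integral (d : ℕ) :
    ∫ v : EuclideanSpace ℝ (Fin d), Real.exp (-(1/2) * ‖v‖ ^ 2) = (2 * Real.pi) ^ ((d : ℝ)/2) := by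
  rw [GaussianFourier.integral_rexp_neg_mul_sq_norm (by norm_num : (0:ℝ) < 1/2)]
  have : Module.finrank ℝ (EuclideanSpace ℝ (Fin d)) = d := finrank_euclideanSpace_fin
  rw [this]
  ring_nf


lemma gauss_univ (d : ℕ) : gaussES d 0 1 univ = 1 := by
  rw [gaussES, withDensity_apply _ MeasurableSet.univ, Measure.restrict_univ]
  have hpt : ∀ x : EuclideanSpace ℝ (Fin d),
      (2 * Real.pi) ^ (-(d : ℝ) / 2) * ((1:ℝ) ^ d)⁻¹ * Real.exp (-‖x - 0‖ ^ 2 / (2 * 1 ^ 2))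
      = (2 * Real.pi) ^ (-(d : ℝ) / 2) * Real.exp (-(1/2) * ‖x‖ ^ 2) := by
    intro x; rw [sub_zero]; norm_num; ring_nf; tauto
  simp_rw [hpt]
  rw [← ofReal_integral_eq_lintegral_ofReal
      (((integrable_std d).const_mul _))
      (Filter.Eventually.of_forall fun x => by positivity)]
  rw [integral_const_mul, std_integral]
  rw [← Real.rpow_add (by positivity)]
  rw [show -(d : ℝ) / 2 + (d:ℝ) / 2 = 0 by ring, Real.rpow_zero, ENNReal.ofReal_one]

lemma gauss_neg (d : ℕ) {A : Set (EuclideanSpace ℝ (Fin d))} (hA : MeasurableSet A) :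
    gaussES d 0 1 ((fun u => -u) ⁻¹' A) = gaussES d 0 1 A := by
  have hmeas : Measurable fun u : EuclideanSpace ℝ (Fin d) => -u := measurable_neg
  rw [gaussES, withDensity_apply _ (hmeas hA), withDensity_apply _ hA]
  have hvol : Measure.map (fun u : EuclideanSpace ℝ (Fin d) => -u) volume = volume :=
    Measure.map_neg_eq_self volume
  conv_rhs => rw [← hvol]
  rw [Measure.restrict_map hmeas hA, lintegral_map (by apply Measurable.ennreal_ofReal; fun_prop) hmeas]
  apply lintegral_congr
  intro u
  simp [norm_neg]

lemma inner_continuous (d : ℕ) (g : EuclideanSpace ℝ (Fin d)) :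
    Continuous fun u : EuclideanSpace ℝ (Fin d) => ⟪g, u⟫ := continuous_const.inner continuous_id

lemma vol_hyperplane (d : ℕ) (g : EuclideanSpace ℝ (Fin d)) (hg : g ≠ 0) :
    (volume : Measure (EuclideanSpace ℝ (Fin d))) {x | ⟪g, x⟫ = 0} = 0 := by
  have h : {x : EuclideanSpace ℝ (Fin d) | ⟪g, x⟫ = 0}
      = (LinearMap.ker (InnerProductSpace.toDual ℝ _ g).toLinearMap : Set _) := by
    ext x; simp [InnerProductSpace.toDual_apply_apply]
  rw [h]
  apply Measure.addHaar_submodule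
  intro h2
  have h3 := LinearMap.ker_eq_top.mp h2
  have h4 : (InnerProductSpace.toDual ℝ (EuclideanSpace ℝ (Fin d)) g) g = 0 := by
    have := DFunLike.congr_fun h3 g; simpa using this
  rw [InnerProductSpace.toDual_apply_apply] at h4
  exact hg (inner_self_eq_zero.mp h4)

lemma gauss_abs_cont (d : ℕ) {A : Set (EuclideanSpace ℝ (Fin d))} (hA : MeasurableSet A)
    (h : volume A = 0) : gaussES d 0 1 A = 0 := by
  rw [gaussES, withDensity_apply _ hA, Measure.restrict_eq_zero.mpr h, lintegral_zero_measure]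

lemma gauss_half (d : ℕ) (g : EuclideanSpace ℝ (Fin d)) (hg : g ≠ 0) :
    gaussES d 0 1 {u | ⟪g, u⟫ < 0} = 1/2 := by
  set γ := gaussES d 0 1 with hγ
  have hcont := inner_continuous d g
  have hlt : MeasurableSet {u : EuclideanSpace ℝ (Fin d) | ⟪g, u⟫ < 0} :=
    (isOpen_lt hcont continuous_const).measurableSet
  have hgt : MeasurableSet {u : EuclideanSpace ℝ (Fin d) | 0 < ⟪g, u⟫} :=
    (isOpen_lt continuous_const hcont).measurableSet
  have heq : MeasurableSet {u : EuclideanSpace ℝ (Fin d) | ⟪g, u⟫ = 0} :=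
    (isClosed_eq hcont continuous_const).measurableSet
  have hEq0 : γ {u | ⟪g, u⟫ = 0} = 0 := gauss_abs_cont d heq (vol_hyperplane d g hg)
  have hneg : γ {u : EuclideanSpace ℝ (Fin d) | 0 < ⟪g, u⟫} = γ {u | ⟪g, u⟫ < 0} := by
    have : (fun u : EuclideanSpace ℝ (Fin d) => -u) ⁻¹' {u | ⟪g, u⟫ < 0}
        = {u : EuclideanSpace ℝ (Fin d) | 0 < ⟪g, u⟫} := by
      ext u; simp [inner_neg_right]
    rw [← gauss_neg d hlt, this]
  have hunion : (univ : Set (EuclideanSpace ℝ (Fin d)))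
      = {u | ⟪g, u⟫ < 0} ∪ ({u | ⟪g, u⟫ = 0} ∪ {u | 0 < ⟪g, u⟫}) := by
    ext u; simp only [mem_univ, mem_union, mem_setOf_eq, true_iff]
    rcases lt_trichotomy (⟪g, u⟫) 0 with h | h | h <;> tauto
  have h1 : γ univ = 1 := gauss_univ d
  rw [hunion] at h1
  rw [measure_union _ (heq.union hgt), measure_union _ hgt, hEq0, hneg] at h1
  · rw [zero_add] at h1
    rw [ENNReal.eq_div_iff (by norm_num) (by norm_num)]
    rw [two_mul]
    exact h1.symm ▸ rfl
  · rw [Set.disjoint_left]; intro u hu1 hu2; simp at hu1 hu2; linarith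
  · rw [Set.disjoint_left]; intro u hu1 hu2
    simp only [mem_setOf_eq, mem_union] at hu1 hu2
    rcases hu2 with h | h <;> linarith

lemma gauss_finite (d : ℕ) : IsFiniteMeasure (gaussES d 0 1) :=
  ⟨by rw [gauss_univ]; exact ENNReal.one_lt_top⟩

lemma gauss_tail (d : ℕ) {δ : ENNReal} (hδ : 0 < δ) :
    ∃ T : ℝ, 0 < T ∧ gaussES d 0 1 {u | T < ‖u‖} < δ := by
  set γ := gaussES d 0 1
  have hs : ∀ n : ℕ, MeasurableSet {u : EuclideanSpace ℝ (Fin d) | (n:ℝ) < ‖u‖} := fun n =>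
    (isOpen_lt continuous_const continuous_norm).measurableSet
  have hmono : Antitone fun n : ℕ => {u : EuclideanSpace ℝ (Fin d) | (n:ℝ) < ‖u‖} := by
    intro a b hab u hu
    simp only [mem_setOf_eq] at hu ⊢
    exact lt_of_le_of_lt (by exact_mod_cast hab) hu
  have hfin : ∃ n : ℕ, γ {u : EuclideanSpace ℝ (Fin d) | (n:ℝ) < ‖u‖} ≠ ⊤ := by
    refine ⟨0, ?_⟩
    have := gauss_finite d
    exact (measure_lt_top γ _).ne
  have hiInter : (⋂ n : ℕ, {u : EuclideanSpace ℝ (Fin d) | (n:ℝ) < ‖u‖}) = ∅ := by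
    ext u
    simp only [mem_iInter, mem_setOf_eq, mem_empty_iff_false, iff_false, not_forall, not_lt]
    obtain ⟨n, hn⟩ := exists_nat_ge ‖u‖
    exact ⟨n, hn⟩
  have htd := tendsto_measure_iInter_atTop (μ := γ) (fun n => (hs n).nullMeasurableSet) hmono hfin
  rw [hiInter, measure_empty] at htd
  have := htd.eventually_lt_const hδ
  obtain ⟨n, hn⟩ := this.exists
  refine ⟨(n:ℝ) + 1, by positivity, ?_⟩
  refine lt_of_le_of_lt (measure_mono ?_) hn
  intro u hu
  simp only [mem_setOf_eq] at hu ⊢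
  linarith

lemma gauss_slab (d : ℕ) (g : EuclideanSpace ℝ (Fin d)) (hg : g ≠ 0) {δ : ENNReal} (hδ : 0 < δ) :
    ∃ a : ℝ, 0 < a ∧ gaussES d 0 1 {u | -a ≤ ⟪g, u⟫ ∧ ⟪g, u⟫ ≤ 0} < δ := by
  set γ := gaussES d 0 1
  have hcont := inner_continuous d g
  have hs : ∀ n : ℕ, MeasurableSet {u : EuclideanSpace ℝ (Fin d) |
      -((1:ℝ)/(n+1)) ≤ ⟪g, u⟫ ∧ ⟪g, u⟫ ≤ 0} := fun n =>
    ((isClosed_le continuous_const hcont).inter (isClosed_le hcont continuous_const)).measurableSet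
  have hmono : Antitone fun n : ℕ => {u : EuclideanSpace ℝ (Fin d) |
      -((1:ℝ)/(n+1)) ≤ ⟪g, u⟫ ∧ ⟪g, u⟫ ≤ 0} := by
    intro a b hab u hu
    simp only [mem_setOf_eq] at hu ⊢
    refine ⟨le_trans ?_ hu.1, hu.2⟩
    have h1 : (1:ℝ)/(b+1) ≤ 1/(a+1) := by
      apply one_div_le_one_div_of_le (by positivity)
      exact_mod_cast add_le_add_left (Nat.cast_le.mpr hab) 1
    linarith
  have hfin : ∃ n : ℕ, γ {u : EuclideanSpace ℝ (Fin d) |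
      -((1:ℝ)/(n+1)) ≤ ⟪g, u⟫ ∧ ⟪g, u⟫ ≤ 0} ≠ ⊤ := by
    refine ⟨0, ?_⟩
    have := gauss_finite d
    exact (measure_lt_top γ _).ne
  have hiInter : (⋂ n : ℕ, {u : EuclideanSpace ℝ (Fin d) |
      -((1:ℝ)/(n+1)) ≤ ⟪g, u⟫ ∧ ⟪g, u⟫ ≤ 0}) ⊆ {u | ⟪g, u⟫ = 0} := by
    intro u hu
    simp only [mem_iInter, mem_setOf_eq] at hu ⊢
    have h1 : ∀ n : ℕ, -((1:ℝ)/(n+1)) ≤ ⟪g, u⟫ := fun n => (hu n).1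
    have h2 : ⟪g, u⟫ ≤ 0 := (hu 0).2
    by_contra hne
    have hneg : ⟪g, u⟫ < 0 := lt_of_le_of_ne h2 hne
    obtain ⟨n, hn⟩ := exists_nat_gt (1 / (-⟪g, u⟫))
    have hn1 : (1:ℝ) / (-⟪g, u⟫) < n + 1 := by linarith
    have : (1:ℝ)/(n+1) < -⟪g, u⟫ := by
      rw [div_lt_iff₀ (by linarith : (0:ℝ) < -⟪g, u⟫)] at hn1
      rw [div_lt_iff₀ (by positivity : (0:ℝ) < (n:ℝ)+1)]
      nlinarith
    linarith [h1 n]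
  have htd := tendsto_measure_iInter_atTop (μ := γ) (fun n => (hs n).nullMeasurableSet) hmono hfin
  have hzero : γ (⋂ n : ℕ, {u : EuclideanSpace ℝ (Fin d) |
      -((1:ℝ)/(n+1)) ≤ ⟪g, u⟫ ∧ ⟪g, u⟫ ≤ 0}) = 0 := by
    refine le_antisymm (le_trans (measure_mono hiInter) ?_) zero_le
    rw [gauss_abs_cont d ((isClosed_eq hcont continuous_const).measurableSet)
      (vol_hyperplane d g hg)]
  rw [hzero] at htd
  obtain ⟨n, hn⟩ := (htd.eventually_lt_const hδ).exists
  exact ⟨(1:ℝ)/(n+1), by positivity, hn⟩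

lemma key_estimate (d : ℕ) (f : EuclideanSpace ℝ (Fin d) → ℝ) (hf : ContDiff ℝ 1 f)
    (p : ℝ) (hp0 : 0 < p) (hp : p < 1 / 2)
    (m : EuclideanSpace ℝ (Fin d)) (hm : gradient f m ≠ 0) :
    ∃ c r : ℝ, 0 < c ∧ c ≤ 1 ∧ 0 < r ∧
      ∀ x ∈ Metric.ball m r, ∀ σ : ℝ, 0 < σ → σ ≤ c →
        ENNReal.ofReal p < pLt d f x σ := by
  classical
  set γ := gaussES d 0 1 with hγdef
  have hγfin := gauss_finite d
  set g := gradient f m with hg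
  set q : ENNReal := ENNReal.ofReal p with hq
  have hq2 : q < 1/2 := by
    rw [hq, show (1/2 : ENNReal) = ENNReal.ofReal (1/2) by
      rw [ENNReal.ofReal_div_of_pos (by norm_num)]; norm_num]
    exact ENNReal.ofReal_lt_ofReal_iff (by norm_num) |>.mpr hp
  set δ : ENNReal := (1/2 - q)/3 with hδdef
  have hδ0 : 0 < δ := ENNReal.div_pos (tsub_pos_of_lt hq2).ne' (by norm_num)
  have hδtop : δ ≠ ⊤ :=
    (ENNReal.div_lt_top (ENNReal.sub_ne_top (by norm_num)) (by norm_num)).ne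
  have hq2δ : q + (δ + δ) < 1/2 := by
    have h3 : δ + (δ + δ) = 1/2 - q := by
      rw [hδdef, ENNReal.div_add_div_same, ENNReal.div_add_div_same]
      rw [show (1/2 - q) + ((1/2 - q) + (1/2 - q)) = 3 * (1/2 - q) by ring]
      rw [mul_comm, mul_div_assoc, ENNReal.div_self (by norm_num) (by norm_num), mul_one]
    have hlt : δ + δ < δ + (δ + δ) := by
      conv_lhs => rw [← add_zero (δ + δ)]
      rw [show δ + (δ + δ) = (δ + δ) + δ by ring]
      exact ENNReal.add_lt_add_left (by finiteness) hδ0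
    calc q + (δ + δ) < q + (δ + (δ + δ)) := ENNReal.add_lt_add_left ENNReal.ofReal_ne_top hlt
      _ = q + (1/2 - q) := by rw [h3]
      _ = 1/2 := by rw [add_comm]; exact tsub_add_cancel_of_le hq2.le
  obtain ⟨T, hT0, hTail⟩ := gauss_tail d hδ0
  obtain ⟨a, ha0, hSlab⟩ := gauss_slab d g hm hδ0
  -- γ S > q where S = {⟪g,u⟫ < -a} ∩ {‖u‖ ≤ T}
  set S : Set (EuclideanSpace ℝ (Fin d)) := {u | ⟪g, u⟫ < -a ∧ ‖u‖ ≤ T} with hS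
  have hγS : q < γ S := by
    have hsub1 : {u : EuclideanSpace ℝ (Fin d) | ⟪g, u⟫ < 0}
        ⊆ S ∪ {u | -a ≤ ⟪g, u⟫ ∧ ⟪g, u⟫ ≤ 0} ∪ {u | T < ‖u‖} := by
      intro u hu
      simp only [mem_setOf_eq, mem_union, hS] at hu ⊢
      by_cases h1 : -a ≤ ⟪g, u⟫
      · exact Or.inl (Or.inr ⟨h1, le_of_lt hu⟩)
      · by_cases h2 : ‖u‖ ≤ T
        · exact Or.inl (Or.inl ⟨lt_of_not_ge h1, h2⟩)
        · exact Or.inr (lt_of_not_ge h2)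
    have hchain : (1/2 : ENNReal) ≤ γ S + (δ + δ) := by
      calc (1/2 : ENNReal) = γ {u | ⟪g, u⟫ < 0} := (gauss_half d g hm).symm
        _ ≤ γ (S ∪ {u | -a ≤ ⟪g, u⟫ ∧ ⟪g, u⟫ ≤ 0} ∪ {u | T < ‖u‖}) := measure_mono hsub1
        _ ≤ γ S + γ {u | -a ≤ ⟪g, u⟫ ∧ ⟪g, u⟫ ≤ 0} + γ {u | T < ‖u‖} := by
            refine le_trans (measure_union_le _ _) ?_
            exact add_le_add_left (measure_union_le _ _) _
        _ ≤ γ S + δ + δ := by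
            exact add_le_add (add_le_add le_rfl hSlab.le) hTail.le
        _ = γ S + (δ + δ) := by ring
    have := lt_of_lt_of_le hq2δ hchain
    exact lt_of_add_lt_add_right (by rwa [add_comm, add_comm (γ S)] at this)
  -- choose ε and r₀ from C¹ continuity
  set ε : ℝ := a / (2 * T) with hεdef
  have hε0 : 0 < ε := by positivity
  have hfd : Continuous (fderiv ℝ f) := hf.continuous_fderiv one_ne_zero
  obtain ⟨r₀, hr₀0, hH⟩ := Metric.continuousAt_iff.mp (hfd.continuousAt (x := m)) ε hε0
  have hdf : Differentiable ℝ f := hf.differentiable one_ne_zero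
  set ℓ : EuclideanSpace ℝ (Fin d) →L[ℝ] ℝ := fderiv ℝ f m with hℓ
  have hℓinner : ∀ v, ℓ v = ⟪g, v⟫ := by
    intro v
    rw [hg, gradient, InnerProductSpace.toDual_symm_apply]
  have hFdiff : ∀ z ∈ Metric.ball m r₀, DifferentiableAt ℝ (fun z => f z - ℓ z) z :=
    fun z _ => (hdf z).sub (ℓ.differentiableAt)
  have hFbound : ∀ z ∈ Metric.ball m r₀, ‖fderiv ℝ (fun z => f z - ℓ z) z‖ ≤ ε := by
    intro z hz
    rw [fderiv_fun_sub (hdf z) ℓ.differentiableAt, ℓ.fderiv]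
    rw [← dist_eq_norm]
    exact (hH (Metric.mem_ball.mp hz)).le
  have hMVT : ∀ x ∈ Metric.ball m r₀, ∀ y ∈ Metric.ball m r₀,
      ‖(f y - ℓ y) - (f x - ℓ x)‖ ≤ ε * ‖y - x‖ := fun x hx y hy =>
    (convex_ball m r₀).norm_image_sub_le_of_norm_fderiv_le hFdiff hFbound hx hy
  refine ⟨min 1 (r₀ / (2 * T)), r₀ / 2, by positivity, min_le_left _ _, by positivity, ?_⟩
  intro x hx σ hσ0 hσc
  have hσT : σ * T ≤ r₀ / 2 := by
    have h1 : σ ≤ r₀ / (2 * T) := le_trans hσc (min_le_right _ _)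
    calc σ * T ≤ (r₀ / (2 * T)) * T := by nlinarith
      _ = r₀ / 2 := by field_simp
  have hA : MeasurableSet {y : EuclideanSpace ℝ (Fin d) | f y < f x} :=
    (isOpen_lt hf.continuous continuous_const).measurableSet
  rw [pLt, gaussES_map d x hσ0 hA]
  refine lt_of_lt_of_le hγS (measure_mono ?_)
  rintro u ⟨hu1, hu2⟩
  simp only [mem_preimage, mem_setOf_eq]
  set y := x + σ • u with hy
  have hyx : y - x = σ • u := by rw [hy]; abel
  have hxball : x ∈ Metric.ball m r₀ := by
    rw [Metric.mem_ball] at hx ⊢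
    linarith
  have hyball : y ∈ Metric.ball m r₀ := by
    rw [Metric.mem_ball] at hx ⊢
    calc dist y m ≤ dist y x + dist x m := dist_triangle y x m
      _ = ‖σ • u‖ + dist x m := by rw [dist_eq_norm, hyx]
      _ ≤ σ * T + dist x m := by
          rw [norm_smul, Real.norm_eq_abs, abs_of_pos hσ0]
          have := mul_le_mul_of_nonneg_left hu2 hσ0.le
          linarith
      _ < r₀ := by linarith
  have hmvt := hMVT x hxball y hyball
  have hℓsmul : ℓ (σ • u) = σ * ⟪g, u⟫ := by
    rw [ℓ.map_smul, smul_eq_mul, hℓinner]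
  have hub : f y - f x ≤ σ * ⟪g, u⟫ + ε * (σ * T) := by
    have h1 : (f y - ℓ y) - (f x - ℓ x) ≤ ε * ‖y - x‖ := by
      have := hmvt
      rw [Real.norm_eq_abs] at this
      exact le_trans (le_abs_self _) this
    have h2 : ℓ y - ℓ x = σ * ⟪g, u⟫ := by rw [← map_sub, hyx, hℓsmul]
    have h3 : ‖y - x‖ ≤ σ * T := by
      rw [hyx, norm_smul, Real.norm_eq_abs, abs_of_pos hσ0]
      exact mul_le_mul_of_nonneg_left hu2 hσ0.le
    have h4 : ε * ‖y - x‖ ≤ ε * (σ * T) := mul_le_mul_of_nonneg_left h3 hε0.le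
    linarith
  have hεT : ε * (σ * T) = σ * (a / 2) := by
    rw [hεdef]; field_simp
  have : f y - f x < 0 := by
    rw [hεT] at hub
    have h5 : σ * ⟪g, u⟫ < σ * (-a) := mul_lt_mul_of_pos_left hu1 hσ0
    have h6 : σ * (-a) + σ * (a / 2) = -(σ * (a / 2)) := by ring
    have h7 : 0 < σ * (a / 2) := by positivity
    linarith
  linarith

/-- A continuously differentiable `f` is `p`-improvable on its set
`Y` of regular points, for every `0 < p < 1/2`: there is a lower semicontinuous
function `ξ̃ : Y → (0,1]` with `ξ̃ ≤ ξ_p^f` on `Y`. -/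
theorem improvable_on_regular_points
    (d : ℕ) (hd : 1 ≤ d)
    (f : EuclideanSpace ℝ (Fin d) → ℝ) (hf : ContDiff ℝ 1 f)
    (p : ℝ) (hp0 : 0 < p) (hp : p < 1 / 2) :
    ∃ ξt : EuclideanSpace ℝ (Fin d) → ℝ,
      LowerSemicontinuousOn ξt {x | gradient f x ≠ 0} ∧
      ∀ x ∈ {x : EuclideanSpace ℝ (Fin d) | gradient f x ≠ 0},
        0 < ξt x ∧ ξt x ≤ 1 ∧ ENNReal.ofReal (ξt x) ≤ xiES d f p x := by
  classical
  have H : ∀ i : {m : EuclideanSpace ℝ (Fin d) // gradient f m ≠ 0},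
      ∃ cr : ℝ × ℝ, 0 < cr.1 ∧ cr.1 ≤ 1 ∧ 0 < cr.2 ∧
      ∀ x ∈ Metric.ball (i : EuclideanSpace ℝ (Fin d)) cr.2, ∀ σ : ℝ, 0 < σ → σ ≤ cr.1 →
        ENNReal.ofReal p < pLt d f x σ := by
    intro i
    obtain ⟨c, r, hc0, hc1, hr0, hball⟩ := key_estimate d f hf p hp0 hp i i.2
    exact ⟨(c, r), hc0, hc1, hr0, hball⟩
  choose cr hc0 hc1 hr0 hball using H
  set ind : {m : EuclideanSpace ℝ (Fin d) // gradient f m ≠ 0} →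
      EuclideanSpace ℝ (Fin d) → ℝ :=
    fun i => (Metric.ball (i : EuclideanSpace ℝ (Fin d)) (cr i).2).indicator
      (fun _ => (cr i).1) with hind
  have hind_le_one : ∀ i z, ind i z ≤ 1 := by
    intro i z
    simp only [hind]
    by_cases h : z ∈ Metric.ball (i : EuclideanSpace ℝ (Fin d)) (cr i).2
    · rw [Set.indicator_of_mem h]; exact hc1 i
    · rw [Set.indicator_of_notMem h]; norm_num
  have hbdd : ∀ z : EuclideanSpace ℝ (Fin d), BddAbove (range fun i => ind i z) := by
    intro z
    refine ⟨1, ?_⟩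
    rintro _ ⟨i, rfl⟩
    exact hind_le_one i z
  refine ⟨fun z => ⨆ i, ind i z, ?_, ?_⟩
  · apply LowerSemicontinuous.lowerSemicontinuousOn
    apply lowerSemicontinuous_ciSup hbdd
    intro i
    simp only [hind]
    exact Metric.isOpen_ball.lowerSemicontinuous_indicator (hc0 i).le
  · intro x hx
    have hxY : gradient f x ≠ 0 := hx
    set i₀ : {m : EuclideanSpace ℝ (Fin d) // gradient f m ≠ 0} := ⟨x, hxY⟩
    have hmem : x ∈ Metric.ball (i₀ : EuclideanSpace ℝ (Fin d)) (cr i₀).2 :=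
      Metric.mem_ball_self (hr0 i₀)
    have hind₀ : ind i₀ x = (cr i₀).1 := Set.indicator_of_mem hmem _
    have hne : Nonempty {m : EuclideanSpace ℝ (Fin d) // gradient f m ≠ 0} := ⟨i₀⟩
    refine ⟨?_, ?_, ?_⟩
    · calc (0:ℝ) < (cr i₀).1 := hc0 i₀
        _ = ind i₀ x := hind₀.symm
        _ ≤ ⨆ i, ind i x := le_ciSup (hbdd x) i₀
    · exact ciSup_le fun i => hind_le_one i x
    · set B : ENNReal := min 1 (xiES d f p x) with hB
      have hBtop : B ≠ ⊤ := by
        rw [hB]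
        exact (lt_of_le_of_lt (min_le_left _ _) ENNReal.one_lt_top).ne
      have hterm : ∀ i, ind i x ≤ B.toReal := by
        intro i
        simp only [hind]
        by_cases hmemb : x ∈ Metric.ball (i : EuclideanSpace ℝ (Fin d)) (cr i).2
        · rw [Set.indicator_of_mem hmemb]
          have hofle : ENNReal.ofReal (cr i).1 ≤ xiES d f p x := by
            apply le_sInf
            rintro s ⟨σ, hσ0, rfl, hple⟩
            have hcltσ : (cr i).1 < σ := by
              by_contra hle
              push_neg at hle
              exact absurd hple (not_le.mpr (hball i x hmemb σ hσ0 hle))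
            exact ENNReal.ofReal_le_ofReal hcltσ.le
          have hof1 : ENNReal.ofReal (cr i).1 ≤ 1 := ENNReal.ofReal_le_one.mpr (hc1 i)
          have hofB : ENNReal.ofReal (cr i).1 ≤ B := le_min hof1 hofle
          calc (cr i).1 = (ENNReal.ofReal (cr i).1).toReal :=
                (ENNReal.toReal_ofReal (hc0 i).le).symm
            _ ≤ B.toReal := ENNReal.toReal_mono hBtop hofB
        · rw [Set.indicator_of_notMem hmemb]
          exact ENNReal.toReal_nonneg
      have hsup : (⨆ i, ind i x) ≤ B.toReal := ciSup_le hterm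
      calc ENNReal.ofReal (⨆ i, ind i x) ≤ ENNReal.ofReal B.toReal :=
            ENNReal.ofReal_le_ofReal hsup
        _ = B := ENNReal.ofReal_toReal hBtop
        _ ≤ xiES d f p x := min_le_right _ _
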